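/- arXiv:0811.2562 — 2 statements merged into one kernel-verified Lean document; each statement's English description precedes it below -/
import Mathlib

section
/- Let G_{2,n} be the complete bipartite directed graph with sources a_1, a_2 and sinks b_1, ..., b_n, all edges oriented from an a to a b. Then N(G_{2,n}) = Σ_{i=1}^n [ ∏_{j<i} (x_{a_1} - x_{b_j}) · ∏_{k>i} (x_{a_2} - x_{b_k}) ]. -/
open scoped BigOperators

/-- The field of rational functions in variables indexed by `V` over `ℚ`. -/
abbrev K (V : Type) : Type := FractionRing (MvPolynomial V ℚ)

/-- The variable `x_v` seen inside the field of rational functions. -/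
noncomputable def xv {V : Type} (v : V) : K V :=
  algebraMap (MvPolynomial V ℚ) (K V) (MvPolynomial.X v)

/-- `ψ_w = 1 / ∏ (x_{w_i} - x_{w_{i+1}})` for a word `w`. -/
noncomputable def psi {V : Type} (w : List V) : K V :=
  (((w.zip w.tail).map fun p => xv p.1 - xv p.2).prod)⁻¹

/-- The word (list of vertices) associated to an enumeration `σ` of the vertex set `W`. -/
def wordOf {V : Type} (W : Finset V) (σ : Fin W.card ≃ W) : List V :=
  (List.finRange W.card).map fun i => ((σ i : W) : V)

/-- `σ` enumerates `W` in an order compatible with all edges of `E`: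
the origin of every edge appears before its end. -/
def IsExt {V : Type} (W : Finset V) (E : Finset (V × V)) (σ : Fin W.card ≃ W) : Prop :=
  ∀ e ∈ E, ∃ i j : Fin W.card, i < j ∧ ((σ i : W) : V) = e.1 ∧ ((σ j : W) : V) = e.2

instance {V : Type} [DecidableEq V] (W : Finset V) (E : Finset (V × V)) (σ : Fin W.card ≃ W) :
    Decidable (IsExt W E σ) := by unfold IsExt; exact inferInstance

/-- `Ψ(G) = Σ_{w ∈ L(G)} ψ_w`, the sum over linear extensions of the graph with
vertex set `W` and edge set `E`. -/
noncomputable def PsiG {V : Type} [DecidableEq V] (W : Finset V) (E : Finset (V × V)) : K V :=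
  ∑ σ : Fin W.card ≃ W, if IsExt W E σ then psi (wordOf W σ) else 0

/-- `N(G) = Ψ(G) ⬝ ∏_{(a,b) ∈ E} (x_a - x_b)`. -/
noncomputable def NG {V : Type} [DecidableEq V] (W : Finset V) (E : Finset (V × V)) : K V :=
  PsiG W E * ∏ e ∈ E, (xv e.1 - xv e.2)

/-- `φ(G)`, the formal sum of the linear extensions of `G` in the free abelian
group on words. -/
noncomputable def phiG {V : Type} [DecidableEq V] (W : Finset V) (E : Finset (V × V)) :
    List V →₀ ℤ :=
  ∑ σ : Fin W.card ≃ W, if IsExt W E σ then Finsupp.single (wordOf W σ) 1 else 0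

/-- The graph has no directed circuit. -/
def Acyclic {V : Type} (E : Finset (V × V)) : Prop :=
  ∀ v : V, ¬ Relation.TransGen (fun a b => (a, b) ∈ E) v v

/-- The underlying undirected simple graph of the directed graph with edge set `E`. -/
def undirected {V : Type} (E : Finset (V × V)) : SimpleGraph V :=
  SimpleGraph.fromRel fun a b => (a, b) ∈ E

/-- The cyclically-consecutive pairs of a list of vertices. -/
def cyclePairs {V : Type} [DecidableEq V] (vs : List V) : Finset (V × V) :=
  Finset.image (fun i : Fin vs.length => (vs.get i, vs.get (finRotate _ i))) Finset.univ

/-- `vs` is (the vertex list of) a cycle of the graph `E`, whose set of forward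
edges (edges traversed in their graph orientation) is `HE`. -/
def IsCycle {V : Type} [DecidableEq V] (E : Finset (V × V)) (vs : List V)
    (HE : Finset (V × V)) : Prop :=
  2 ≤ vs.length ∧ vs.Nodup ∧ HE ⊆ cyclePairs vs ∧ HE ⊆ E ∧
    ∀ p ∈ cyclePairs vs, p ∉ HE → (p.2, p.1) ∈ E


lemma xv_injective {V : Type} : Function.Injective (xv (V := V)) := by
  intro a b h
  have := (IsFractionRing.injective (MvPolynomial V ℚ) (K V)) h
  exact MvPolynomial.X_injective this

lemma xv_sub_ne_zero {V : Type} {a b : V} (h : a ≠ b) : xv a - xv b ≠ 0 := by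
  intro hc
  exact h (xv_injective (by linear_combination (norm := ring_nf) hc))

lemma psi_cons {V : Type} (a b : V) (l : List V) :
    psi (a :: b :: l) = (xv a - xv b)⁻¹ * psi (b :: l) := by
  simp [psi, mul_inv_rev, mul_comm]

lemma psi_single {V : Type} (a : V) : psi [a] = 1 := by simp [psi]


lemma partial_fractions {F : Type*} [Field F] {n : ℕ} (w : Fin (n+1) → F) (z : F)
    (hw : Function.Injective w) (hz : ∀ p, z ≠ w p) :
    ∑ p : Fin (n+1), (z - w p)⁻¹ * (∏ q ∈ Finset.univ.erase p, (w p - w q))⁻¹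
      = (∏ p, (z - w p))⁻¹ := by
  have hbasis := Lagrange.sum_basis (v := w) (s := Finset.univ) hw.injOn
    Finset.univ_nonempty
  have heval := congrArg (Polynomial.eval z) hbasis
  rw [Polynomial.eval_finset_sum, Polynomial.eval_one] at heval
  have hterm : ∀ p : Fin (n+1), Polynomial.eval z (Lagrange.basis Finset.univ w p)
      = ∏ q ∈ Finset.univ.erase p, ((w p - w q)⁻¹ * (z - w q)) := by
    intro p
    rw [Lagrange.basis, Polynomial.eval_prod]
    refine Finset.prod_congr rfl fun q _ => ?_
    simp [Lagrange.basisDivisor]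
  have hne : ∀ p : Fin (n+1), z - w p ≠ 0 := fun p => sub_ne_zero.mpr (hz p)
  have hprodne : (∏ p, (z - w p)) ≠ 0 := Finset.prod_ne_zero_iff.mpr fun p _ => hne p
  rw [eq_comm, inv_eq_iff_eq_inv, eq_comm, inv_eq_of_mul_eq_one_left]
  rw [Finset.mul_sum, ← heval]
  refine Finset.sum_congr rfl fun p _ => ?_
  rw [hterm, Finset.prod_mul_distrib, ← Finset.prod_inv_distrib,
    (Finset.mul_prod_erase _ _ (Finset.mem_univ p)).symm.trans rfl]
  have h1 : (z - w p) * (z - w p)⁻¹ = 1 := mul_inv_cancel₀ (hne p)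
  calc ((z - w p) * ∏ q ∈ Finset.univ.erase p, (z - w q)) *
        ((z - w p)⁻¹ * (∏ q ∈ Finset.univ.erase p, (w p - w q)⁻¹))
      = ((z - w p) * (z - w p)⁻¹) * ((∏ q ∈ Finset.univ.erase p, (w p - w q)⁻¹)
          * ∏ q ∈ Finset.univ.erase p, (z - w q)) := by ring
    _ = _ := by rw [h1, one_mul]

lemma starSum_eq {V : Type} : ∀ (n : ℕ) (z : V) (y : Fin n → V),
    Function.Injective y → (∀ i, z ≠ y i) →
    ∑ π : Equiv.Perm (Fin n), psi (z :: (List.finRange n).map (fun i => y (π i))) =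
      (∏ i, (xv z - xv (y i)))⁻¹ := by
  intro n
  induction n with
  | zero =>
    intro z y _ _
    simp [psi]
  | succ n ih =>
    intro z y hy hz
    rw [← Equiv.sum_comp (Equiv.Perm.decomposeFin.symm)
      (fun π : Equiv.Perm (Fin (n+1)) =>
        psi (z :: (List.finRange (n+1)).map (fun i => y (π i)))), Fintype.sum_prod_type]
    have hword : ∀ (p : Fin (n+1)) (e : Equiv.Perm (Fin n)),
        (List.finRange (n+1)).map (fun i => y ((Equiv.Perm.decomposeFin.symm (p, e)) i))
          = y p :: (List.finRange n).map
              (fun i => (fun x : Fin n => y (Equiv.swap 0 p x.succ)) (e i)) := by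
      intro p e
      rw [List.finRange_succ, List.map_cons, List.map_map]
      simp [Function.comp_def]
    calc ∑ p : Fin (n+1), ∑ e : Equiv.Perm (Fin n),
          psi (z :: (List.finRange (n+1)).map
            (fun i => y ((Equiv.Perm.decomposeFin.symm (p, e)) i)))
        = ∑ p : Fin (n+1), (xv z - xv (y p))⁻¹ *
            ∑ e : Equiv.Perm (Fin n),
              psi (y p :: (List.finRange n).map
                (fun i => (fun x : Fin n => y (Equiv.swap 0 p x.succ)) (e i))) := by
          refine Finset.sum_congr rfl fun p _ => ?_
          rw [Finset.mul_sum]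
          refine Finset.sum_congr rfl fun e _ => ?_
          rw [hword p e, psi_cons]
      _ = ∑ p : Fin (n+1), (xv z - xv (y p))⁻¹ *
            (∏ q ∈ Finset.univ.erase p, (xv (y p) - xv (y q)))⁻¹ := by
          refine Finset.sum_congr rfl fun p _ => ?_
          have hy' : Function.Injective (fun x : Fin n => y (Equiv.swap 0 p x.succ)) := by
            intro a b hab
            exact Fin.succ_injective _ ((Equiv.swap 0 p).injective (hy hab))
          have key : ∀ i : Fin n, Equiv.swap 0 p i.succ ≠ p := by
            intro i h
            have h2 := congrArg (Equiv.swap 0 p) h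
            rw [Equiv.swap_apply_self, Equiv.swap_apply_right] at h2
            exact Fin.succ_ne_zero i h2
          have hzp : ∀ i : Fin n, y p ≠ y (Equiv.swap 0 p i.succ) := by
            intro i h
            exact key i (hy h.symm)
          rw [ih (y p) _ hy' hzp]
          congr 1
          congr 1
          refine Finset.prod_bij (fun (i : Fin n) _ => Equiv.swap 0 p i.succ) ?_ ?_ ?_ ?_
          · intro i _
            exact Finset.mem_erase.mpr ⟨key i, Finset.mem_univ _⟩
          · intro a _ b _ hab
            exact Fin.succ_injective _ ((Equiv.swap 0 p).injective hab)
          · intro q hq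
            rcases Finset.mem_erase.mp hq with ⟨hqp, -⟩
            have h0 : Equiv.swap 0 p q ≠ 0 := by
              intro h
              have h2 := congrArg (Equiv.swap 0 p) h
              rw [Equiv.swap_apply_self, Equiv.swap_apply_left] at h2
              exact hqp h2
            refine ⟨(Equiv.swap 0 p q).pred h0, Finset.mem_univ _, ?_⟩
            simp [Fin.succ_pred]
          · intro i _
            rfl
      _ = (∏ i, (xv z - xv (y i)))⁻¹ := by
          exact partial_fractions (fun p => xv (y p)) (xv z)
            (fun a b h => hy (xv_injective h))
            (fun p h => hz p (xv_injective h))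

lemma telescope {F : Type*} [CommRing F] (n : ℕ) (A B : F) (Y : Fin n → F) :
    (∑ i : Fin n, (∏ j ∈ Finset.univ.filter (· < i), (A - Y j)) *
        ∏ k ∈ Finset.univ.filter (i < ·), (B - Y k)) * (A - B)
      = (∏ i, (A - Y i)) - ∏ i, (B - Y i) := by
  classical
  set G : ℕ → F := fun m =>
    (∏ j ∈ Finset.univ.filter (fun j : Fin n => (j : ℕ) < m), (A - Y j)) *
      ∏ k ∈ Finset.univ.filter (fun k : Fin n => m ≤ (k : ℕ)), (B - Y k) with hG
  have key : ∀ m ∈ Finset.range n,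
      (∏ j ∈ Finset.univ.filter (fun j : Fin n => (j : ℕ) < m), (A - Y j)) *
        (∏ k ∈ Finset.univ.filter (fun k : Fin n => m + 1 ≤ (k : ℕ)), (B - Y k)) * (A - B)
        = G (m + 1) - G m := by
    intro m hm
    rw [Finset.mem_range] at hm
    set ι : Fin n := ⟨m, hm⟩ with hι
    have h1 : Finset.univ.filter (fun j : Fin n => (j : ℕ) < m + 1)
        = insert ι (Finset.univ.filter (fun j : Fin n => (j : ℕ) < m)) := by
      ext q
      simp only [Finset.mem_filter, Finset.mem_univ, true_and, Finset.mem_insert, hι,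
        Fin.ext_iff]
      omega
    have h2 : Finset.univ.filter (fun k : Fin n => m ≤ (k : ℕ))
        = insert ι (Finset.univ.filter (fun k : Fin n => m + 1 ≤ (k : ℕ))) := by
      ext q
      simp only [Finset.mem_filter, Finset.mem_univ, true_and, Finset.mem_insert, hι,
        Fin.ext_iff]
      omega
    have hn1 : ι ∉ Finset.univ.filter (fun j : Fin n => (j : ℕ) < m) := by simp [hι]
    have hn2 : ι ∉ Finset.univ.filter (fun k : Fin n => m + 1 ≤ (k : ℕ)) := by simp [hι]
    simp only [hG]
    simp only [h1, h2, Finset.prod_insert hn1, Finset.prod_insert hn2]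
    ring
  have sum_eq : (∑ i : Fin n, (∏ j ∈ Finset.univ.filter (· < i), (A - Y j)) *
      (∏ k ∈ Finset.univ.filter (i < ·), (B - Y k))) * (A - B)
      = ∑ m ∈ Finset.range n, (G (m + 1) - G m) := by
    rw [Finset.sum_mul]
    have : ∀ i : Fin n, (∏ j ∈ Finset.univ.filter (· < i), (A - Y j)) *
        (∏ k ∈ Finset.univ.filter (i < ·), (B - Y k)) * (A - B)
        = G ((i : ℕ) + 1) - G (i : ℕ) := by
      intro i
      have f1 : Finset.univ.filter (· < i)
          = Finset.univ.filter (fun j : Fin n => (j : ℕ) < (i : ℕ)) := by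
        ext q; simp only [Finset.mem_filter, Finset.mem_univ, true_and, Fin.lt_def]
      have f2 : Finset.univ.filter (i < ·)
          = Finset.univ.filter (fun k : Fin n => (i : ℕ) + 1 ≤ (k : ℕ)) := by
        ext q; simp only [Finset.mem_filter, Finset.mem_univ, true_and, Fin.lt_def]; omega
      rw [f1, f2]
      exact key (i : ℕ) (Finset.mem_range.mpr i.is_lt)
    rw [Finset.sum_congr rfl fun i _ => this i]
    exact show ∑ i : Fin n, (G ((i:ℕ)+1) - G (i:ℕ))
        = ∑ m ∈ Finset.range n, (G (m+1) - G m) from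
      Fin.sum_univ_eq_sum_range (fun m => G (m+1) - G m) n
  rw [sum_eq, Finset.sum_range_sub G n]
  have hGn : G n = ∏ i, (A - Y i) := by
    simp only [hG]
    have e1 : Finset.univ.filter (fun j : Fin n => (j : ℕ) < n) = Finset.univ := by
      ext q; simp [q.is_lt]
    have e2 : Finset.univ.filter (fun k : Fin n => n ≤ (k : ℕ)) = ∅ := by
      ext q; simp [Nat.not_le.mpr q.is_lt]
    rw [e1, e2, Finset.prod_empty, mul_one]
  have hG0 : G 0 = ∏ i, (B - Y i) := by
    simp only [hG]
    have e1 : Finset.univ.filter (fun j : Fin n => (j : ℕ) < 0) = ∅ := by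
      ext q; simp
    have e2 : Finset.univ.filter (fun k : Fin n => 0 ≤ (k : ℕ)) = Finset.univ := by
      ext q; simp
    rw [e1, e2, Finset.prod_empty, one_mul]
  rw [hGn, hG0]

section TwoN

variable (n : ℕ)

lemma hc : (Finset.univ : Finset (Fin 2 ⊕ Fin n)).card = 2 + n := by simp

def uEquiv : {x // x ∈ (Finset.univ : Finset (Fin 2 ⊕ Fin n))} ≃ (Fin 2 ⊕ Fin n) :=
  Equiv.subtypeUnivEquiv fun x => Finset.mem_univ x

def pack (τ : Equiv.Perm (Fin 2)) (π : Equiv.Perm (Fin n)) :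
    Fin (Finset.univ : Finset (Fin 2 ⊕ Fin n)).card ≃
      {x // x ∈ (Finset.univ : Finset (Fin 2 ⊕ Fin n))} :=
  (finCongr (hc n)).trans ((finSumFinEquiv.symm).trans
    ((Equiv.sumCongr τ π).trans (uEquiv n).symm))

lemma pack_coe (τ : Equiv.Perm (Fin 2)) (π : Equiv.Perm (Fin n))
    (i : Fin (Finset.univ : Finset (Fin 2 ⊕ Fin n)).card) :
    ((pack n τ π i : _) : Fin 2 ⊕ Fin n)
      = Equiv.sumCongr τ π (finSumFinEquiv.symm (finCongr (hc n) i)) := rfl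

lemma map_finRange_congr {α : Type*} {m k : ℕ} (h : m = k) (g : Fin k → α) :
    (List.finRange m).map (fun i => g (finCongr h i)) = (List.finRange k).map g := by
  subst h; simp

lemma finRange_two_add :
    List.finRange (2 + n) = (Fin.castAdd n 0) :: (Fin.castAdd n 1) ::
      (List.finRange n).map (Fin.natAdd 2) := by
  apply List.ext_getElem
  · simp [Nat.add_comm]
    omega
  · intro i h1 h2
    match i with
    | 0 => simp [Fin.ext_iff]
    | 1 => simp [Fin.ext_iff]
    | (k+2) =>
      simp only [List.getElem_finRange, List.getElem_cons_succ, List.getElem_map,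
        Fin.ext_iff, Fin.natAdd_mk, Fin.coe_cast]
      simp [Fin.ext_iff, Nat.add_comm]

lemma word_pack (τ : Equiv.Perm (Fin 2)) (π : Equiv.Perm (Fin n)) :
    wordOf Finset.univ (pack n τ π)
      = Sum.inl (τ 0) :: Sum.inl (τ 1) ::
          (List.finRange n).map (fun i => Sum.inr (π i)) := by
  unfold wordOf
  have h1 : ((List.finRange (Finset.univ : Finset (Fin 2 ⊕ Fin n)).card).map
      fun i => ((pack n τ π i : _) : Fin 2 ⊕ Fin n))
      = (List.finRange (2 + n)).map
          (fun j => Equiv.sumCongr τ π (finSumFinEquiv.symm j)) := by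
    simp only [pack_coe]
    exact map_finRange_congr (hc n) (fun j => Equiv.sumCongr τ π (finSumFinEquiv.symm j))
  rw [h1, finRange_two_add, List.map_cons, List.map_cons, List.map_map]
  simp [finSumFinEquiv_symm_apply_castAdd, finSumFinEquiv_symm_apply_natAdd,
    Function.comp_def]

end TwoN

section Ext
variable (n : ℕ)

def En : Finset ((Fin 2 ⊕ Fin n) × (Fin 2 ⊕ Fin n)) :=
  Finset.univ.image fun p : Fin 2 × Fin n =>
    ((Sum.inl p.1, Sum.inr p.2) : (Fin 2 ⊕ Fin n) × (Fin 2 ⊕ Fin n))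

lemma isExt_pack (τ : Equiv.Perm (Fin 2)) (π : Equiv.Perm (Fin n)) :
    IsExt Finset.univ (En n) (pack n τ π) := by
  intro e he
  rw [En, Finset.mem_image] at he
  obtain ⟨⟨h, i⟩, -, rfl⟩ := he
  refine ⟨(finCongr (hc n)).symm (finSumFinEquiv (Sum.inl (τ.symm h))),
    (finCongr (hc n)).symm (finSumFinEquiv (Sum.inr (π.symm i))), ?_, ?_, ?_⟩
  · rw [Fin.lt_def]
    simp only [finCongr_symm, finCongr_apply, Fin.coe_cast, finSumFinEquiv_apply_left,
      finSumFinEquiv_apply_right, Fin.coe_castAdd, Fin.coe_natAdd]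
    have := (τ.symm h).is_lt
    omega
  · rw [pack_coe, Equiv.apply_symm_apply]
    simp
  · rw [pack_coe, Equiv.apply_symm_apply]
    simp

lemma isExt_surj (σ : Fin (Finset.univ : Finset (Fin 2 ⊕ Fin n)).card ≃
      {x // x ∈ (Finset.univ : Finset (Fin 2 ⊕ Fin n))})
    (hσ : IsExt Finset.univ (En n) σ) :
    ∃ τ π, pack n τ π = σ := by
  classical
  set u := uEquiv n with hu
  set F : Equiv.Perm (Fin 2 ⊕ Fin n) :=
    finSumFinEquiv.trans (((finCongr (hc n)).symm).trans (σ.trans u)) with hF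
  -- positions
  set P : (Fin 2 ⊕ Fin n) → Fin (2 + n) :=
    fun x => finCongr (hc n) (σ.symm (u.symm x)) with hP
  have hFsymm : ∀ x, F.symm x = finSumFinEquiv.symm (P x) := by
    intro x
    simp [hF, hP, Equiv.symm_apply_eq]
    rfl
  have hpos : ∀ (h : Fin 2) (i : Fin n), P (Sum.inl h) < P (Sum.inr i) := by
    intro h i
    have hmem : ((Sum.inl h, Sum.inr i) : (Fin 2 ⊕ Fin n) × (Fin 2 ⊕ Fin n)) ∈ En n :=
      Finset.mem_image.mpr ⟨(h, i), Finset.mem_univ _, rfl⟩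
    obtain ⟨i0, j0, hij, h1, h2⟩ := hσ _ hmem
    have hi0 : i0 = σ.symm (u.symm (Sum.inl h)) := by
      have : u (σ i0) = Sum.inl h := h1
      rw [← this]
      simp
      exact (σ.symm_apply_apply i0).symm
    have hj0 : j0 = σ.symm (u.symm (Sum.inr i)) := by
      have : u (σ j0) = Sum.inr i := h2
      rw [← this]
      simp
      exact (σ.symm_apply_apply j0).symm
    rw [hP]
    simp only [finCongr_apply, Fin.lt_def, Fin.coe_cast]
    rw [← hi0, ← hj0]
    exact hij
  have hmaps : ∀ h : Fin 2, ∃ h', F.symm (Sum.inl h) = Sum.inl h' := by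
    intro h
    rcases hx : F.symm (Sum.inl h) with h' | i
    · exact ⟨h', rfl⟩
    · exfalso
      rw [hFsymm] at hx
      have hPval : (P (Sum.inl h) : ℕ) = 2 + (i : ℕ) := by
        have : P (Sum.inl h) = finSumFinEquiv (Sum.inr i) := by
          rw [← hx, Equiv.apply_symm_apply]
        rw [this]
        simp
      have hcard : (Finset.univ : Finset (Fin n)).card ≤
          (Finset.Ioi (P (Sum.inl h))).card := by
        apply Finset.card_le_card_of_injOn (fun j => P (Sum.inr j))
        · intro j _
          exact Finset.mem_Ioi.mpr (hpos h j)
        · intro a _ b _ hab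
          exact Sum.inr_injective (u.symm.injective
            (σ.symm.injective ((finCongr (hc n)).injective hab)))
      rw [Finset.card_univ, Fintype.card_fin, Fin.card_Ioi, hPval] at hcard
      have := i.is_lt
      omega
  have hmapsTo : Set.MapsTo F.symm (Set.range Sum.inl) (Set.range Sum.inl) := by
    rintro x ⟨h, rfl⟩
    obtain ⟨h', hh'⟩ := hmaps h
    exact ⟨h', hh'.symm⟩
  obtain ⟨⟨τ', π'⟩, hτπ⟩ :=
    Equiv.Perm.mem_sumCongrHom_range_of_perm_mapsTo_inl hmapsTo
  have hFval : F = Equiv.sumCongr τ'.symm π'.symm := by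
    have h1 : F.symm = Equiv.sumCongr τ' π' := by
      rw [← hτπ]; rfl
    have h2 : F = (Equiv.sumCongr τ' π').symm := by
      rw [← h1, Equiv.symm_symm]
    rw [h2, Equiv.sumCongr_symm]
  refine ⟨τ'.symm, π'.symm, ?_⟩
  ext i
  have : (Equiv.sumCongr τ'.symm π'.symm) (finSumFinEquiv.symm (finCongr (hc n) i))
      = u (σ i) := by
    rw [← hFval, hF]
    simp only [Equiv.trans_apply, Equiv.apply_symm_apply, Equiv.symm_apply_apply]
  calc ((pack n τ'.symm π'.symm i : _) : Fin 2 ⊕ Fin n)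
      = (Equiv.sumCongr τ'.symm π'.symm) (finSumFinEquiv.symm (finCongr (hc n) i)) :=
        pack_coe n _ _ i
    _ = u (σ i) := this
    _ = ((σ i : _) : Fin 2 ⊕ Fin n) := rfl

lemma pack_injective :
    Function.Injective
      (fun tp : Equiv.Perm (Fin 2) × Equiv.Perm (Fin n) => pack n tp.1 tp.2) := by
  intro ⟨τ, π⟩ ⟨τ', π'⟩ h
  simp only at h
  have key : ∀ x : Fin 2 ⊕ Fin n,
      Equiv.sumCongr τ π x = Equiv.sumCongr τ' π' x := by
    intro x
    have h2 := Equiv.ext_iff.mp h ((finCongr (hc n)).symm (finSumFinEquiv x))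
    have h3 := congrArg Subtype.val h2
    rw [pack_coe, pack_coe, Equiv.apply_symm_apply, Equiv.symm_apply_apply] at h3
    simpa using h3
  have hτ : τ = τ' := by
    apply Equiv.ext; intro a
    have h1 : Sum.inl (τ a) = (Sum.inl (τ' a) : Fin 2 ⊕ Fin n) := by
      simpa using key (Sum.inl a)
    exact Sum.inl_injective h1
  have hπ : π = π' := by
    apply Equiv.ext; intro b
    have h1 : Sum.inr (π b) = (Sum.inr (π' b) : Fin 2 ⊕ Fin n) := by
      simpa using key (Sum.inr b)
    exact Sum.inr_injective h1
  simp [hτ, hπ]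

end Ext


lemma sum_perm_two {M : Type*} [AddCommMonoid M] (f : Equiv.Perm (Fin 2) → M) :
    ∑ τ : Equiv.Perm (Fin 2), f τ = f 1 + f (Equiv.swap 0 1) := by
  rw [← Equiv.sum_comp Equiv.Perm.decomposeFin.symm f, Fintype.sum_prod_type,
    Fin.sum_univ_two]
  rw [Fintype.sum_subsingleton _ (1 : Equiv.Perm (Fin 1)),
    Fintype.sum_subsingleton _ (1 : Equiv.Perm (Fin 1))]
  rw [Equiv.Perm.decomposeFin_symm_of_one, Equiv.Perm.decomposeFin_symm_of_one,
    Equiv.swap_self]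
  rfl

/-- the complete bipartite graph `G_{2,n}` with sources `a₁, a₂` and
sinks `b₁, …, b_n`:
`N(G_{2,n}) = Σ_i ∏_{j<i}(x_{a₁} - x_{b_j}) ∏_{k>i}(x_{a₂} - x_{b_k})`. -/
theorem NG_bipartite (n : ℕ) :
    NG (Finset.univ : Finset (Fin 2 ⊕ Fin n))
        (Finset.univ.image fun p : Fin 2 × Fin n =>
          ((Sum.inl p.1, Sum.inr p.2) : (Fin 2 ⊕ Fin n) × (Fin 2 ⊕ Fin n))) =
      ∑ i : Fin n,
        (∏ j ∈ Finset.univ.filter (· < i), (xv (Sum.inl 0) - xv (Sum.inr j))) *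
          ∏ k ∈ Finset.univ.filter (i < ·), (xv (Sum.inl 1) - xv (Sum.inr k)) := by
  classical
  have hE : (Finset.univ.image fun p : Fin 2 × Fin n =>
      ((Sum.inl p.1, Sum.inr p.2) : (Fin 2 ⊕ Fin n) × (Fin 2 ⊕ Fin n))) = En n := rfl
  rw [NG, PsiG, hE]
  set A : K (Fin 2 ⊕ Fin n) := xv (Sum.inl 0 : Fin 2 ⊕ Fin n) with hA
  set B : K (Fin 2 ⊕ Fin n) := xv (Sum.inl 1 : Fin 2 ⊕ Fin n) with hB
  set Y : Fin n → K (Fin 2 ⊕ Fin n) := fun i => xv (Sum.inr i : Fin 2 ⊕ Fin n) with hY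
  set PA : K (Fin 2 ⊕ Fin n) := ∏ i, (A - Y i) with hPA
  set PB : K (Fin 2 ⊕ Fin n) := ∏ i, (B - Y i) with hPB
  -- Step 1: reduce the sum over enumerations to a sum over pairs of permutations
  have step1 : (∑ σ : Fin (Finset.univ : Finset (Fin 2 ⊕ Fin n)).card ≃
        {x // x ∈ (Finset.univ : Finset (Fin 2 ⊕ Fin n))},
        if IsExt Finset.univ (En n) σ then psi (wordOf Finset.univ σ) else 0)
      = ∑ tp : Equiv.Perm (Fin 2) × Equiv.Perm (Fin n),
          psi (wordOf Finset.univ (pack n tp.1 tp.2)) := by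
    rw [← Finset.sum_filter]
    refine (Finset.sum_bij (fun tp _ => pack n tp.1 tp.2) ?_ ?_ ?_ ?_).symm
    · intro tp _
      exact Finset.mem_filter.mpr ⟨Finset.mem_univ _, isExt_pack n tp.1 tp.2⟩
    · intro a _ b _ hab
      exact pack_injective n hab
    · intro σ hσ
      obtain ⟨τ, π, hτπ⟩ := isExt_surj n σ (Finset.mem_filter.mp hσ).2
      exact ⟨(τ, π), Finset.mem_univ _, hτπ⟩
    · intro tp _
      rfl
  rw [step1]
  -- Step 2: evaluate the sum over pairs
  have step2 : (∑ tp : Equiv.Perm (Fin 2) × Equiv.Perm (Fin n),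
        psi (wordOf Finset.univ (pack n tp.1 tp.2)))
      = (A - B)⁻¹ * PB⁻¹ + (B - A)⁻¹ * PA⁻¹ := by
    rw [Fintype.sum_prod_type]
    have inner : ∀ τ : Equiv.Perm (Fin 2),
        (∑ π : Equiv.Perm (Fin n), psi (wordOf Finset.univ (pack n τ π)))
        = (xv (Sum.inl (τ 0) : Fin 2 ⊕ Fin n) - xv (Sum.inl (τ 1) : Fin 2 ⊕ Fin n))⁻¹ *
            (∏ i, (xv (Sum.inl (τ 1) : Fin 2 ⊕ Fin n) - xv (Sum.inr i : Fin 2 ⊕ Fin n)))⁻¹ := by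
      intro τ
      have hword : ∀ π : Equiv.Perm (Fin n),
          psi (wordOf Finset.univ (pack n τ π))
          = (xv (Sum.inl (τ 0) : Fin 2 ⊕ Fin n) - xv (Sum.inl (τ 1) : Fin 2 ⊕ Fin n))⁻¹ *
              psi ((Sum.inl (τ 1) : Fin 2 ⊕ Fin n) ::
                (List.finRange n).map (fun i => Sum.inr (π i))) := by
        intro π
        rw [word_pack, psi_cons]
      rw [Finset.sum_congr rfl fun π _ => hword π, ← Finset.mul_sum]
      congr 1
      exact starSum_eq n (Sum.inl (τ 1)) Sum.inr
        (fun a b hab => Sum.inr_injective hab)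
        (fun i => by simp)
    rw [Finset.sum_congr rfl fun τ _ => inner τ, sum_perm_two]
    simp only [Equiv.Perm.one_apply, Equiv.swap_apply_left, Equiv.swap_apply_right]
    rfl
  rw [step2]
  -- Step 3: the edge product
  have step3 : (∏ e ∈ En n, (xv e.1 - xv e.2)) = PA * PB := by
    rw [En, Finset.prod_image]
    · rw [Fintype.prod_prod_type, Fin.prod_univ_two]
    · intro p _ q _ hpq
      simp only [Prod.mk.injEq, Sum.inl.injEq, Sum.inr.injEq] at hpq
      exact Prod.ext hpq.1 hpq.2
  rw [step3]
  -- Step 4: final algebraic identity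
  have hAB : A - B ≠ 0 := xv_sub_ne_zero (by simp)
  have hPAne : PA ≠ 0 := Finset.prod_ne_zero_iff.mpr
    fun i _ => xv_sub_ne_zero (by simp)
  have hPBne : PB ≠ 0 := Finset.prod_ne_zero_iff.mpr
    fun i _ => xv_sub_ne_zero (by simp)
  apply mul_right_cancel₀ hAB
  rw [telescope n A B Y]
  rw [show B - A = -(A - B) by ring, inv_neg]
  have e1 : (A - B)⁻¹ * (A - B) = 1 := inv_mul_cancel₀ hAB
  have e2 : PA⁻¹ * PA = 1 := inv_mul_cancel₀ hPAne
  have e3 : PB⁻¹ * PB = 1 := inv_mul_cancel₀ hPBne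
  calc ((A - B)⁻¹ * PB⁻¹ + -(A - B)⁻¹ * PA⁻¹) * (PA * PB) * (A - B)
      = ((A - B)⁻¹ * (A - B)) * ((PB⁻¹ * PB) * PA)
        - ((A - B)⁻¹ * (A - B)) * ((PA⁻¹ * PA) * PB) := by ring
    _ = PA - PB := by rw [e1, e2, e3]; ring
end

section
/- Möbius function and disconnecting chains: Let P be a finite poset, c a chain of the Hasse diagram of P with vertex set V_c, and P_1, ..., P_n the regions associated to c (induced subposets on G_i ∪ V_c where G_i are the connected components of the Hasse diagram minus V_c). For distinct i, j ∈ P: if j covers i then μ_P(i,j) = −1; otherwise μ_P(i,j) = Σ_{k=1}^n μ_{P_k}(i,j), with the convention that μ_Q(i,j)=0 if i∉Q or j∉Q. -/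
open scoped BigOperators

open IncidenceAlgebra

section MuAux
variable {P : Type} [PartialOrder P] [DecidableEq P] [LocallyFiniteOrder P]

lemma covBy_Ico_eq' {a b : P} (h : a ⋖ b) : Finset.Ico a b = {a} := by
  ext x
  simp only [Finset.mem_Ico, Finset.mem_singleton]
  constructor
  · rintro ⟨h1, h2⟩
    rcases h1.lt_or_eq with h3 | h3
    · exact absurd h2 (h.2 h3)
    · exact h3.symm
  · rintro rfl; exact ⟨le_rfl, h.lt⟩

lemma mu_covBy' {a b : P} (h : a ⋖ b) : mu ℤ a b = -1 := by
  rw [mu_eq_neg_sum_Ico_of_ne h.ne, covBy_Ico_eq' h, Finset.sum_singleton, mu_self]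

noncomputable def muE (F : Finset P) (a b : P) : ℤ :=
  if h : a ∈ F ∧ b ∈ F then mu ℤ (⟨a, h.1⟩ : {x : P // x ∈ F}) ⟨b, h.2⟩ else 0

lemma muE_not_mem {F : Finset P} {a b : P} (h : ¬(a ∈ F ∧ b ∈ F)) : muE F a b = 0 := dif_neg h

lemma muE_self {F : Finset P} {a : P} (ha : a ∈ F) : muE F a a = 1 := by
  unfold muE
  rw [dif_pos ⟨ha, ha⟩, mu_self]

lemma muE_not_le {F : Finset P} {a b : P} (h : ¬ a ≤ b) : muE F a b = 0 := by
  unfold muE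
  split_ifs with hm
  · exact apply_eq_zero_of_not_le (fun hh => h (Subtype.mk_le_mk.mp hh)) _
  · rfl

lemma muE_sum {F : Finset P} {a b : P} (ha : a ∈ F) (hb : b ∈ F) :
    ∑ x ∈ (Finset.Icc a b).filter (· ∈ F), muE F a x = if a = b then 1 else 0 := by
  have key := sum_Icc_mu_right (𝕜 := ℤ) (⟨a, ha⟩ : {x : P // x ∈ F}) ⟨b, hb⟩
  have h2 : ∑ x ∈ Finset.Icc (⟨a, ha⟩ : {x : P // x ∈ F}) ⟨b, hb⟩, mu ℤ ⟨a, ha⟩ x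
      = ∑ x ∈ (Finset.Icc a b).filter (· ∈ F), muE F a x := by
    rw [Finset.subtype_Icc_eq, ← Finset.sum_subtype_eq_sum_filter (muE F a)]
    refine Finset.sum_congr rfl fun x hx => ?_
    unfold muE
    rw [dif_pos ⟨ha, x.2⟩]
  rw [h2] at key
  rw [key]
  simp [Subtype.mk_eq_mk]

lemma muE_ne_sum {F : Finset P} {a b : P} (ha : a ∈ F) (hb : b ∈ F) (hab : a ≠ b) :
    muE F a b = -∑ x ∈ (Finset.Ico a b).filter (· ∈ F), muE F a x := by
  have key := mu_eq_neg_sum_Ico_of_ne (𝕜 := ℤ)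
    (a := (⟨a, ha⟩ : {x : P // x ∈ F})) (b := ⟨b, hb⟩)
    (fun h => hab (Subtype.mk_eq_mk.mp h))
  have h2 : ∑ x ∈ Finset.Ico (⟨a, ha⟩ : {x : P // x ∈ F}) ⟨b, hb⟩, mu ℤ ⟨a, ha⟩ x
      = ∑ x ∈ (Finset.Ico a b).filter (· ∈ F), muE F a x := by
    rw [Finset.subtype_Ico_eq, ← Finset.sum_subtype_eq_sum_filter (muE F a)]
    refine Finset.sum_congr rfl fun x hx => ?_
    unfold muE
    rw [dif_pos ⟨ha, x.2⟩]
  rw [← h2]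
  unfold muE
  rw [dif_pos ⟨ha, hb⟩, key]

lemma muE_covBy {F : Finset P} {a b : P} (h : a ⋖ b) (ha : a ∈ F) (hb : b ∈ F) :
    muE F a b = -1 := by
  rw [muE_ne_sum ha hb h.ne, covBy_Ico_eq' h, Finset.filter_singleton, if_pos ha,
    Finset.sum_singleton, muE_self ha]

end MuAux

section ChainAux
variable {P : Type} [PartialOrder P]

lemma chain_pairwise {vs : List P} (hchain : List.Chain' (· ⋖ ·) vs) :
    vs.Pairwise (· < ·) :=
  List.isChain_iff_pairwise.mp (hchain.imp (fun _ _ h => h.lt))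

lemma chain_comp {vs : List P} (hchain : List.Chain' (· ⋖ ·) vs)
    {a b : P} (ha : a ∈ vs) (hb : b ∈ vs) : a ≤ b ∨ b ≤ a := by
  have hp := List.pairwise_iff_get.mp (chain_pairwise hchain)
  obtain ⟨t, rfl⟩ := List.mem_iff_get.mp ha
  obtain ⟨s, rfl⟩ := List.mem_iff_get.mp hb
  rcases lt_trichotomy t s with h | h | h
  · exact Or.inl (hp t s h).le
  · exact Or.inl (le_of_eq (congrArg vs.get h))
  · exact Or.inr (hp s t h).le

lemma chain_succ {vs : List P} (hchain : List.Chain' (· ⋖ ·) vs)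
    {a d : P} (ha : a ∈ vs) (hd : d ∈ vs) (had : a < d) :
    ∃ c ∈ vs, a ⋖ c ∧ c ≤ d ∧ ∀ x ∈ vs, a ⋖ x → x = c := by
  have hp := List.pairwise_iff_get.mp (chain_pairwise hchain)
  obtain ⟨t, rfl⟩ := List.mem_iff_get.mp ha
  obtain ⟨s, rfl⟩ := List.mem_iff_get.mp hd
  have hts : t < s := by
    rcases lt_trichotomy t s with h | h | h
    · exact h
    · rw [h] at had; exact absurd had (lt_irrefl _)
    · exact absurd had (asymm (hp s t h))
  have hs' : (s : ℕ) < vs.length := s.isLt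
  have hlen : (t : ℕ) + 1 < vs.length := by
    have : (t : ℕ) < (s : ℕ) := hts
    omega
  set c := vs.get ⟨(t : ℕ) + 1, hlen⟩ with hc
  have hcov : vs.get t ⋖ c := by
    have := List.isChain_iff_getElem.mp hchain (t : ℕ) (by omega)
    convert this using 2 <;> rfl
  have hle : ∀ (u : Fin vs.length), t < u → c ≤ vs.get u := by
    intro u htu
    rcases lt_or_eq_of_le (Nat.succ_le_of_lt htu) with h | h
    · exact (hp ⟨(t : ℕ) + 1, hlen⟩ u h).le
    · refine le_of_eq (congrArg vs.get (Fin.ext ?_))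
      simpa using h
  refine ⟨c, List.get_mem _ _, hcov, hle s hts, ?_⟩
  intro x hx hax
  obtain ⟨u, rfl⟩ := List.mem_iff_get.mp hx
  have htu : t < u := by
    rcases lt_trichotomy t u with h | h | h
    · exact h
    · rw [h] at hax; exact absurd hax.lt (lt_irrefl _)
    · exact absurd hax.lt (asymm (hp u t h))
  rcases lt_or_eq_of_le (hle u htu) with h | h
  · exact absurd h (hax.2 hcov.lt)
  · exact h.symm

end ChainAux

section CrossAux
variable {P : Type} [PartialOrder P] [LocallyFiniteOrder P]

lemma crossing {n : ℕ} {vs : List P} {S : Fin n → Finset P} [DecidableEq P]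
    (hcross : ∀ a b : P, a ⋖ b → ∀ k,
      (a ∈ S k → b ∈ S k ∪ vs.toFinset) ∧ (b ∈ S k → a ∈ S k ∪ vs.toFinset))
    (k : Fin n) :
    ∀ (N : ℕ) (x j : P), (Finset.Icc x j).card ≤ N → x ∈ S k → x < j → j ∉ S k →
      ∃ d ∈ vs.toFinset, x < d ∧ d ≤ j := by
  intro N
  induction N with
  | zero =>
    intro x j hc hx hxj hj
    have : 0 < (Finset.Icc x j).card :=
      Finset.card_pos.mpr ⟨x, Finset.mem_Icc.mpr ⟨le_rfl, hxj.le⟩⟩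
    omega
  | succ N ih =>
    intro x j hc hx hxj hj
    obtain ⟨z, hzm, hzmin'⟩ := Finset.exists_minimal (s := Finset.Ioc x j)
      ⟨j, Finset.mem_Ioc.mpr ⟨hxj, le_rfl⟩⟩
    have hzmin : ∀ w ∈ Finset.Ioc x j, ¬ w < z := fun w hw hwz => hwz.not_ge (hzmin' hw hwz.le)
    rw [Finset.mem_Ioc] at hzm
    have hcov : x ⋖ z :=
      ⟨hzm.1, fun w hw hwz => hzmin w (Finset.mem_Ioc.mpr ⟨hw, hwz.le.trans hzm.2⟩) hwz⟩
    have hz2 := (hcross x z hcov k).1 hx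
    rw [Finset.mem_union] at hz2
    rcases hz2 with hzS | hzC
    · have hzj : z < j := lt_of_le_of_ne hzm.2 (fun h => hj (h ▸ hzS))
      have hcard : (Finset.Icc z j).card ≤ N := by
        have hsub : Finset.Icc z j ⊂ Finset.Icc x j := by
          refine ⟨Finset.Icc_subset_Icc hzm.1.le le_rfl, fun hsub2 => ?_⟩
          have := hsub2 (Finset.mem_Icc.mpr ⟨le_rfl, hxj.le⟩)
          rw [Finset.mem_Icc] at this
          exact absurd this.1 hzm.1.not_ge
        have := Finset.card_lt_card hsub
        omega
      obtain ⟨d, hd, hd1, hd2⟩ := ih z j hcard hzS hzj hj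
      exact ⟨d, hd, hzm.1.trans hd1, hd2⟩
    · exact ⟨z, hzC, hzm.1, hzm.2⟩

end CrossAux

open IncidenceAlgebra in
lemma main_aux {P : Type} [Fintype P] [PartialOrder P] [DecidableEq P] [LocallyFiniteOrder P]
    {n : ℕ} (vs : List P) (hchain : List.Chain' (· ⋖ ·) vs)
    (S : Fin n → Finset P)
    (hdisj : ∀ k l, k ≠ l → Disjoint (S k) (S l))
    (hcover : Finset.univ.biUnion S = Finset.univ \ vs.toFinset)
    (hcross : ∀ a b : P, a ⋖ b → ∀ k,
      (a ∈ S k → b ∈ S k ∪ vs.toFinset) ∧ (b ∈ S k → a ∈ S k ∪ vs.toFinset)) :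
    ∀ (N : ℕ) (i j : P), (Finset.Icc i j).card ≤ N → i < j → ¬ i ⋖ j →
      mu ℤ i j = ∑ k : Fin n, muE (S k ∪ vs.toFinset) i j := by
  have hSC : ∀ (k : Fin n) (x : P), x ∈ S k → x ∉ vs.toFinset := by
    intro k x hx hvx
    have hm : x ∈ Finset.univ.biUnion S := Finset.mem_biUnion.mpr ⟨k, Finset.mem_univ k, hx⟩
    rw [hcover, Finset.mem_sdiff] at hm
    exact hm.2 hvx
  have hcomp : ∀ x : P, x ∉ vs.toFinset → ∃ l, x ∈ S l ∧ ∀ k, x ∈ S k → k = l := by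
    intro x hx
    have hm : x ∈ Finset.univ.biUnion S := by
      rw [hcover, Finset.mem_sdiff]; exact ⟨Finset.mem_univ x, hx⟩
    obtain ⟨l, -, hl⟩ := Finset.mem_biUnion.mp hm
    refine ⟨l, hl, fun k hk => ?_⟩
    by_contra hne
    exact (Finset.disjoint_left.mp (hdisj k l hne) hk) hl
  intro N
  induction N with
  | zero =>
    intro i j hc hij _
    exfalso
    have : 0 < (Finset.Icc i j).card :=
      Finset.card_pos.mpr ⟨i, Finset.mem_Icc.mpr ⟨le_rfl, hij.le⟩⟩
    omega
  | succ N ih =>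
    intro i j hcard hij hnc
    -- abbreviations
    set C := vs.toFinset with hCdef
    -- counting lemma at i
    have hcnt : (∑ k : Fin n, muE (S k ∪ C) i i) = if i ∈ C then (n : ℤ) else 1 := by
      by_cases hiC : i ∈ C
      · rw [if_pos hiC,
          Finset.sum_congr rfl (fun k _ => muE_self (Finset.mem_union_right _ hiC))]
        simp
      · rw [if_neg hiC]
        obtain ⟨l, hl, hluniq⟩ := hcomp i hiC
        have hterm : ∀ k : Fin n, muE (S k ∪ C) i i = if k = l then 1 else 0 := by
          intro k
          by_cases hkl : k = l
          · subst hkl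
            rw [if_pos rfl, muE_self (Finset.mem_union_left _ hl)]
          · rw [if_neg hkl, muE_not_mem]
            rintro ⟨hik, -⟩
            rcases Finset.mem_union.mp hik with h | h
            · exact hkl (hluniq k h)
            · exact hiC h
        rw [Finset.sum_congr rfl (fun k _ => hterm k)]
        simp
    have hpt_i : mu ℤ i i - ∑ k : Fin n, muE (S k ∪ C) i i
        = 1 - (if i ∈ C then (n : ℤ) else 1) := by rw [mu_self, hcnt]
    -- pointwise: middle non-covers
    have hpt_mid : ∀ x : P, i < x → x < j → ¬ i ⋖ x →
        mu ℤ i x - ∑ k : Fin n, muE (S k ∪ C) i x = 0 := by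
      intro x hix hxj hncx
      have hc2 : (Finset.Icc i x).card ≤ N := by
        have hsub : Finset.Icc i x ⊂ Finset.Icc i j := by
          refine ⟨Finset.Icc_subset_Icc le_rfl hxj.le, fun hs => ?_⟩
          have := hs (Finset.mem_Icc.mpr ⟨hij.le, le_rfl⟩)
          rw [Finset.mem_Icc] at this
          exact absurd this.2 hxj.not_ge
        have := Finset.card_lt_card hsub
        omega
      rw [ih i x hc2 hix hncx, sub_self]
    -- pointwise: covers
    have hpt_cov : ∀ x : P, i ⋖ x →
        mu ℤ i x - ∑ k : Fin n, muE (S k ∪ C) i x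
          = if i ∈ C ∧ x ∈ C then (n : ℤ) - 1 else 0 := by
      intro x hcov
      rw [mu_covBy' hcov]
      by_cases hiC : i ∈ C
      · by_cases hxC : x ∈ C
        · rw [if_pos ⟨hiC, hxC⟩,
            Finset.sum_congr rfl (fun k _ =>
              muE_covBy hcov (Finset.mem_union_right _ hiC) (Finset.mem_union_right _ hxC))]
          simp only [Finset.sum_const, Finset.card_univ,
            Fintype.card_fin, nsmul_eq_mul, mul_neg, mul_one]
          ring
        · rw [if_neg (fun hh => hxC hh.2)]
          obtain ⟨l, hl, hluniq⟩ := hcomp x hxC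
          have hterm : ∀ k : Fin n, muE (S k ∪ C) i x = if k = l then -1 else 0 := by
            intro k
            by_cases hkl : k = l
            · subst hkl
              rw [if_pos rfl,
                muE_covBy hcov (Finset.mem_union_right _ hiC) (Finset.mem_union_left _ hl)]
            · rw [if_neg hkl, muE_not_mem]
              rintro ⟨-, hxk⟩
              rcases Finset.mem_union.mp hxk with h | h
              · exact hkl (hluniq k h)
              · exact hxC h
          rw [Finset.sum_congr rfl (fun k _ => hterm k)]
          simp
      · rw [if_neg (fun hh => hiC hh.1)]
        obtain ⟨a, ha, hauniq⟩ := hcomp i hiC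
        have hxa : x ∈ S a ∪ C := (hcross i x hcov a).1 ha
        have hterm : ∀ k : Fin n, muE (S k ∪ C) i x = if k = a then -1 else 0 := by
          intro k
          by_cases hka : k = a
          · subst hka
            rw [if_pos rfl, muE_covBy hcov (Finset.mem_union_left _ ha) hxa]
          · rw [if_neg hka, muE_not_mem]
            rintro ⟨hik, -⟩
            rcases Finset.mem_union.mp hik with h | h
            · exact hka (hauniq k h)
            · exact hiC h
        rw [Finset.sum_congr rfl (fun k _ => hterm k)]
        simp
    -- SUMW core
    have core : ∀ k : Fin n, j ∉ S k ∪ C →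
        ((∑ x ∈ Finset.Ico i j, muE (S k ∪ C) i x) = 0
            ∧ (i ∈ C → ∃ d ∈ C, i < d ∧ d ≤ j))
        ∨ ((∑ x ∈ Finset.Ico i j, muE (S k ∪ C) i x) = 1
            ∧ i ∈ C ∧ ¬∃ d ∈ C, i < d ∧ d ≤ j) := by
      intro k hjF
      by_cases hiF : i ∈ S k ∪ C
      · -- the maximal chain element below j
        have hMne : ((Finset.Icc i j).filter (· ∈ C)).Nonempty := by
          by_cases hiC : i ∈ C
          · exact ⟨i, Finset.mem_filter.mpr ⟨Finset.mem_Icc.mpr ⟨le_rfl, hij.le⟩, hiC⟩⟩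
          · have hiS : i ∈ S k := (Finset.mem_union.mp hiF).resolve_right hiC
            obtain ⟨d, hdC, hid, hdj⟩ := crossing hcross k ((Finset.Icc i j).card) i j
              le_rfl hiS hij (fun hh => hjF (Finset.mem_union_left _ hh))
            exact ⟨d, Finset.mem_filter.mpr ⟨Finset.mem_Icc.mpr ⟨hid.le, hdj⟩, hdC⟩⟩
        obtain ⟨dm, hdm, hdmax'⟩ := Finset.exists_maximal hMne
        have hdmax : ∀ x ∈ (Finset.Icc i j).filter (· ∈ C), ¬ dm < x :=
          fun x hx hdx => hdx.not_ge (hdmax' hx hdx.le)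
        have hdmC : dm ∈ C := (Finset.mem_filter.mp hdm).2
        have hdmIcc := Finset.mem_Icc.mp (Finset.mem_filter.mp hdm).1
        have hdom : ∀ x ∈ (Finset.Icc i j).filter (· ∈ C), x ≤ dm := by
          intro x hx
          have hxC : x ∈ C := (Finset.mem_filter.mp hx).2
          rcases chain_comp hchain (List.mem_toFinset.mp hxC) (List.mem_toFinset.mp hdmC)
            with h | h
          · exact h
          · rcases lt_or_eq_of_le h with h' | h'
            · exact absurd h' (hdmax x hx)
            · exact le_of_eq h'.symm
        have hdmj : dm < j :=
          lt_of_le_of_ne hdmIcc.2 (fun h => hjF (Finset.mem_union_right _ (h ▸ hdmC)))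
        have hseteq : (Finset.Ico i j).filter (· ∈ S k ∪ C)
            = (Finset.Icc i dm).filter (· ∈ S k ∪ C) := by
          ext x
          simp only [Finset.mem_filter, Finset.mem_Ico, Finset.mem_Icc]
          constructor
          · rintro ⟨⟨hix, hxj⟩, hxF⟩
            refine ⟨⟨hix, ?_⟩, hxF⟩
            rcases Finset.mem_union.mp hxF with hxS | hxC
            · obtain ⟨d, hdC, hxd, hdj⟩ := crossing hcross k ((Finset.Icc x j).card) x j
                le_rfl hxS hxj (fun hh => hjF (Finset.mem_union_left _ hh))
              have hdM : d ∈ (Finset.Icc i j).filter (· ∈ C) :=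
                Finset.mem_filter.mpr ⟨Finset.mem_Icc.mpr ⟨hix.trans hxd.le, hdj⟩, hdC⟩
              exact hxd.le.trans (hdom d hdM)
            · exact hdom x (Finset.mem_filter.mpr ⟨Finset.mem_Icc.mpr ⟨hix, hxj.le⟩, hxC⟩)
          · rintro ⟨⟨hix, hxdm⟩, hxF⟩
            exact ⟨⟨hix, lt_of_le_of_lt hxdm hdmj⟩, hxF⟩
        have hsum : (∑ x ∈ Finset.Ico i j, muE (S k ∪ C) i x)
            = if i = dm then 1 else 0 := by
          rw [← Finset.sum_filter_of_ne (p := (· ∈ S k ∪ C))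
            (fun x _ hne => by
              by_contra hxF
              exact hne (muE_not_mem (fun hh => hxF hh.2)))]
          rw [hseteq, muE_sum hiF (Finset.mem_union_right _ hdmC)]
        by_cases hidm : i = dm
        · right
          subst hidm
          refine ⟨by rw [hsum, if_pos rfl], hdmC, ?_⟩
          rintro ⟨d, hdC, hid, hdj⟩
          have hdM : d ∈ (Finset.Icc i j).filter (· ∈ C) :=
            Finset.mem_filter.mpr ⟨Finset.mem_Icc.mpr ⟨hid.le, hdj⟩, hdC⟩
          exact absurd (hdom d hdM) hid.not_ge
        · left
          refine ⟨by rw [hsum, if_neg hidm], fun hiC => ?_⟩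
          exact ⟨dm, hdmC, lt_of_le_of_ne hdmIcc.1 hidm, hdmIcc.2⟩
      · left
        refine ⟨Finset.sum_eq_zero fun x _ => muE_not_mem (fun hh => hiF hh.1), fun hiC => ?_⟩
        exact absurd (Finset.mem_union_right _ hiC) hiF
    -- Step A
    have stepA : ∀ k : Fin n, muE (S k ∪ C) i j
        = -∑ x ∈ Finset.Ico i j, (if j ∈ S k ∪ C then muE (S k ∪ C) i x else 0) := by
      intro k
      by_cases hjk : j ∈ S k ∪ C
      · simp only [if_pos hjk]
        by_cases hik : i ∈ S k ∪ C
        · rw [muE_ne_sum hik hjk hij.ne]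
          congr 1
          rw [Finset.sum_filter]
          refine Finset.sum_congr rfl fun x hx => ?_
          by_cases hxk : x ∈ S k ∪ C
          · rw [if_pos hxk]
          · rw [if_neg hxk, muE_not_mem (fun hh => hxk hh.2)]
        · rw [muE_not_mem (fun hh => hik hh.1),
            Finset.sum_congr rfl (fun x _ => muE_not_mem (fun hh => hik hh.1)),
            Finset.sum_const_zero, neg_zero]
      · simp only [if_neg hjk]
        rw [muE_not_mem (fun hh => hjk hh.2), Finset.sum_const_zero, neg_zero]
    -- assemble
    rw [Finset.sum_congr rfl (fun k _ => stepA k), Finset.sum_neg_distrib,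
      Finset.sum_comm, mu_eq_neg_sum_Ico_of_ne hij.ne, neg_inj, ← sub_eq_zero,
      ← Finset.sum_sub_distrib]
    have hsummand : ∀ x : P,
        mu ℤ i x - ∑ k : Fin n, (if j ∈ S k ∪ C then muE (S k ∪ C) i x else 0)
        = (mu ℤ i x - ∑ k : Fin n, muE (S k ∪ C) i x)
          + ∑ k : Fin n, (if j ∈ S k ∪ C then 0 else muE (S k ∪ C) i x) := by
      intro x
      have h1 : ∀ k : Fin n, muE (S k ∪ C) i x
          = (if j ∈ S k ∪ C then muE (S k ∪ C) i x else 0)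
            + (if j ∈ S k ∪ C then 0 else muE (S k ∪ C) i x) := by
        intro k; split_ifs <;> ring
      rw [show (∑ k : Fin n, muE (S k ∪ C) i x)
          = ∑ k : Fin n, ((if j ∈ S k ∪ C then muE (S k ∪ C) i x else 0)
            + (if j ∈ S k ∪ C then 0 else muE (S k ∪ C) i x)) from
          Finset.sum_congr rfl (fun k _ => h1 k), Finset.sum_add_distrib]
      ring
    rw [Finset.sum_congr rfl (fun x _ => hsummand x), Finset.sum_add_distrib]
    -- T2
    have hT2 : (∑ x ∈ Finset.Ico i j, ∑ k : Fin n,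
          (if j ∈ S k ∪ C then 0 else muE (S k ∪ C) i x))
        = ∑ k : Fin n, (if j ∈ S k ∪ C then 0
            else ∑ x ∈ Finset.Ico i j, muE (S k ∪ C) i x) := by
      rw [Finset.sum_comm]
      refine Finset.sum_congr rfl fun k _ => ?_
      split_ifs <;> simp
    rw [hT2]
    by_cases hiC : i ∈ C
    · by_cases hE : ∃ d ∈ C, i < d ∧ d ≤ j
      · -- case A: i on the chain, some chain element in (i, j]
        obtain ⟨d, hdC, hid, hdj⟩ := hE
        obtain ⟨c, hcvs, hicov, hcd, hcuniq⟩ :=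
          chain_succ hchain (List.mem_toFinset.mp hiC) (List.mem_toFinset.mp hdC) hid
        have hcC : c ∈ C := List.mem_toFinset.mpr hcvs
        have hcj : c < j := lt_of_le_of_ne (hcd.trans hdj) (fun h => hnc (h ▸ hicov))
        have hT2z : (∑ k : Fin n, (if j ∈ S k ∪ C then (0:ℤ)
            else ∑ x ∈ Finset.Ico i j, muE (S k ∪ C) i x)) = 0 := by
          refine Finset.sum_eq_zero fun k _ => ?_
          split_ifs with h
          · rfl
          · rcases core k h with ⟨h0, -⟩ | ⟨-, -, hne⟩
            · exact h0
            · exact absurd ⟨d, hdC, hid, hdj⟩ hne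
        rw [hT2z, add_zero]
        have hpt : ∀ x ∈ Finset.Ico i j,
            mu ℤ i x - ∑ k : Fin n, muE (S k ∪ C) i x
            = (if x = i then 1 - (n:ℤ) else 0) + (if x = c then (n:ℤ) - 1 else 0) := by
          intro x hx
          rw [Finset.mem_Ico] at hx
          rcases eq_or_lt_of_le hx.1 with rfl | hixlt
          · rw [hpt_i, if_pos hiC, if_pos rfl, if_neg hicov.lt.ne]
            ring
          · by_cases hxcov : i ⋖ x
            · by_cases hxC : x ∈ C
              · have hxc : x = c := hcuniq x (List.mem_toFinset.mp hxC) hxcov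
                subst hxc
                rw [hpt_cov x hxcov, if_pos ⟨hiC, hxC⟩, if_neg hixlt.ne', if_pos rfl]
                ring
              · have hxc : x ≠ c := fun h => hxC (h ▸ hcC)
                rw [hpt_cov x hxcov, if_neg (fun hh => hxC hh.2), if_neg hixlt.ne',
                  if_neg hxc]
                ring
            · have hxc : x ≠ c := fun h => hxcov (h ▸ hicov)
              rw [hpt_mid x hixlt hx.2 hxcov, if_neg hixlt.ne', if_neg hxc]
              ring
        rw [Finset.sum_congr rfl hpt, Finset.sum_add_distrib, Finset.sum_ite_eq',
          Finset.sum_ite_eq', if_pos (Finset.mem_Ico.mpr ⟨le_rfl, hij⟩),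
          if_pos (Finset.mem_Ico.mpr ⟨hicov.lt.le, hcj⟩)]
        ring
      · -- case B: i on the chain, no chain element in (i, j]
        have hjC : j ∉ C := fun hjc => hE ⟨j, hjc, hij, le_rfl⟩
        obtain ⟨l, hjl, hluniq⟩ := hcomp j hjC
        have hT2v : (∑ k : Fin n, (if j ∈ S k ∪ C then (0:ℤ)
            else ∑ x ∈ Finset.Ico i j, muE (S k ∪ C) i x)) = (n : ℤ) - 1 := by
          have hterm : ∀ k : Fin n, (if j ∈ S k ∪ C then (0:ℤ)
              else ∑ x ∈ Finset.Ico i j, muE (S k ∪ C) i x)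
              = 1 - (if k = l then 1 else 0) := by
            intro k
            by_cases hkl : k = l
            · subst hkl
              rw [if_pos (Finset.mem_union_left _ hjl), if_pos rfl]
              ring
            · have hjF : j ∉ S k ∪ C := by
                rintro hm
                rcases Finset.mem_union.mp hm with h | h
                · exact hkl (hluniq k h)
                · exact hjC h
              rw [if_neg hjF, if_neg hkl]
              rcases core k hjF with ⟨-, himp⟩ | ⟨h1, -, -⟩
              · exact absurd (himp hiC) hE
              · rw [h1]; ring
          rw [Finset.sum_congr rfl (fun k _ => hterm k), Finset.sum_sub_distrib]
          simp
        rw [hT2v]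
        have hpt : ∀ x ∈ Finset.Ico i j,
            mu ℤ i x - ∑ k : Fin n, muE (S k ∪ C) i x
            = (if x = i then 1 - (n:ℤ) else 0) := by
          intro x hx
          rw [Finset.mem_Ico] at hx
          rcases eq_or_lt_of_le hx.1 with rfl | hixlt
          · rw [hpt_i, if_pos hiC, if_pos rfl]
          · rw [if_neg hixlt.ne']
            by_cases hxcov : i ⋖ x
            · rw [hpt_cov x hxcov, if_neg]
              rintro ⟨-, hxC⟩
              exact hE ⟨x, hxC, hixlt, hx.2.le⟩
            · exact hpt_mid x hixlt hx.2 hxcov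
        rw [Finset.sum_congr rfl hpt, Finset.sum_ite_eq',
          if_pos (Finset.mem_Ico.mpr ⟨le_rfl, hij⟩)]
        ring
    · -- case C: i not on the chain
      have hT2z : (∑ k : Fin n, (if j ∈ S k ∪ C then (0:ℤ)
          else ∑ x ∈ Finset.Ico i j, muE (S k ∪ C) i x)) = 0 := by
        refine Finset.sum_eq_zero fun k _ => ?_
        split_ifs with h
        · rfl
        · rcases core k h with ⟨h0, -⟩ | ⟨-, hiC', -⟩
          · exact h0
          · exact absurd hiC' hiC
      rw [hT2z, add_zero]
      refine Finset.sum_eq_zero fun x hx => ?_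
      rw [Finset.mem_Ico] at hx
      rcases eq_or_lt_of_le hx.1 with rfl | hixlt
      · rw [hpt_i, if_neg hiC]
        ring
      · by_cases hxcov : i ⋖ x
        · rw [hpt_cov x hxcov, if_neg (fun hh => hiC hh.1)]
        · exact hpt_mid x hixlt hx.2 hxcov

open IncidenceAlgebra in
/-- Möbius function and disconnecting chains.  Let `vs` be a chain of
the Hasse diagram of the finite poset `P` whose removal disconnects the Hasse diagram
into the components `S 0, …, S (n-1)`, and let the regions be `S k ∪ V_c`.  For
distinct `i, j`: if `j` covers `i` then `μ_P(i,j) = -1`; otherwise `μ_P(i,j)` is the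
sum over the regions `P_k` of `μ_{P_k}(i,j)` (where `μ_{P_k}(i,j) = 0` if `i ∉ P_k`
or `j ∉ P_k`). -/
theorem mobius_chain (P : Type) [Fintype P] [PartialOrder P] [DecidableEq P]
    [LocallyFiniteOrder P]
    (vs : List P) (hne : vs ≠ []) (hchain : List.Chain' (· ⋖ ·) vs)
    (n : ℕ) (S : Fin n → Finset P)
    (hdisj : ∀ k l, k ≠ l → Disjoint (S k) (S l))
    (hcover : Finset.univ.biUnion S = Finset.univ \ vs.toFinset)
    (hSne : ∀ k, (S k).Nonempty)
    (hSconn : ∀ k,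
      (SimpleGraph.induce (↑(S k) : Set P)
        (SimpleGraph.fromRel fun a b : P => a ⋖ b)).Connected)
    (hcross : ∀ a b : P, a ⋖ b → ∀ k,
      (a ∈ S k → b ∈ S k ∪ vs.toFinset) ∧ (b ∈ S k → a ∈ S k ∪ vs.toFinset)) :
    ∀ i j : P, i ≠ j →
      (i ⋖ j → mu ℤ i j = -1) ∧
      (¬ i ⋖ j → mu ℤ i j =
        ∑ k : Fin n,
          if h : i ∈ S k ∪ vs.toFinset ∧ j ∈ S k ∪ vs.toFinset then
            mu ℤ (⟨i, h.1⟩ : {x : P // x ∈ S k ∪ vs.toFinset}) ⟨j, h.2⟩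
          else 0) := by
  intro i j hij
  constructor
  · intro hcov
    exact mu_covBy' hcov
  · intro hnc
    show mu ℤ i j = ∑ k : Fin n, muE (S k ∪ vs.toFinset) i j
    by_cases hle : i ≤ j
    · exact main_aux vs hchain S hdisj hcover hcross ((Finset.Icc i j).card) i j le_rfl
        (lt_of_le_of_ne hle hij) hnc
    · have h0 : mu ℤ i j = 0 := apply_eq_zero_of_not_le hle _
      rw [h0]
      symm
      refine Finset.sum_eq_zero fun k _ => ?_
      unfold muE
      split_ifs with h
      · exact apply_eq_zero_of_not_le (fun hh => hle (Subtype.mk_le_mk.mp hh)) _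
      · rfl
end
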